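/- Let n ≥ 1 be an integer and consider the TFT recursion tree on pairs (q, r) of nonnegative integers, defined as follows: the root is (0, 0); for a node (q, r), set len(q, r) = ⌈(n − q)/2^r⌉; a node with len(q, r) = 1 is a leaf, and a node with len(q, r) ≥ 2 has exactly two children, (q, r+1) and (q + 2^r, r+1). Then this tree is finite, it has exactly n leaves and exactly 2n − 1 nodes in total, and every node (q, r) with r ≥ 1 satisfies q < 2^r and 2^{r−1} < n. -/

import Mathlib

/-- `len n q r = ⌈(n - q) / 2^r⌉`, the length of the subarray with offset `q` and
stride `2^r` in an array of length `n`. -/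
def len (n q r : ℕ) : ℕ := (n - q + 2 ^ r - 1) / 2 ^ r

/-- The nodes of the TFT recursion tree for size `n`: the root is `(0, 0)`, and a node
`(q, r)` with `len n q r ≥ 2` has the two children `(q, r+1)` and `(q + 2^r, r+1)`. -/
inductive IsNode (n : ℕ) : ℕ × ℕ → Prop where
  | root : IsNode n (0, 0)
  | even (q r : ℕ) : IsNode n (q, r) → 2 ≤ len n q r → IsNode n (q, r + 1)
  | odd (q r : ℕ) : IsNode n (q, r) → 2 ≤ len n q r → IsNode n (q + 2 ^ r, r + 1)

lemma two_le_len_iff {n q r : ℕ} : 2 ≤ len n q r ↔ q + 2 ^ r < n := by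
  have hp : 0 < 2 ^ r := Nat.two_pow_pos r
  unfold len
  rw [Nat.le_div_iff_mul_le hp]
  omega

lemma len_eq_one_iff {n q r : ℕ} : len n q r = 1 ↔ q < n ∧ n ≤ q + 2 ^ r := by
  have hp : 0 < 2 ^ r := Nat.two_pow_pos r
  have h : len n q r = 1 ↔ 1 ≤ len n q r ∧ len n q r < 2 := by omega
  rw [h]
  unfold len
  rw [Nat.one_le_div_iff hp, Nat.div_lt_iff_lt_mul hp]
  omega

lemma one_le_len_iff {n q r : ℕ} : 1 ≤ len n q r ↔ q < n := by
  have hp : 0 < 2 ^ r := Nat.two_pow_pos r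
  unfold len
  rw [Nat.one_le_div_iff hp]
  omega

lemma two_pow_pred {r : ℕ} (hr : 1 ≤ r) : 2 ^ r = 2 * 2 ^ (r - 1) := by
  have h : r - 1 + 1 = r := by omega
  conv_lhs => rw [← h, pow_succ]
  ring

lemma mod_two_pow_le_succ (q k : ℕ) : q % 2 ^ k ≤ q % 2 ^ (k + 1) := by
  conv_lhs => rw [← Nat.mod_mod_of_dvd q (pow_dvd_pow 2 (Nat.le_succ k))]
  exact Nat.mod_le _ _

lemma f_mono (q : ℕ) {k k' : ℕ} (h : k ≤ k') :
    2 ^ k + q % 2 ^ k ≤ 2 ^ k' + q % 2 ^ k' := by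
  induction k' with
  | zero =>
      have hk : k = 0 := by omega
      subst hk; exact le_refl _
  | succ m ih =>
      rcases Nat.lt_or_ge k (m + 1) with h' | h'
      · have ha := ih (by omega)
        have h1 := mod_two_pow_le_succ q m
        have h2 : (2:ℕ) ^ m ≤ 2 ^ (m + 1) :=
          Nat.pow_le_pow_right (by norm_num) (Nat.le_succ m)
        omega
      · have hk : k = m + 1 := by omega
        subst hk; exact le_refl _

lemma node_char_fwd {n : ℕ} : ∀ p : ℕ × ℕ, IsNode n p →
    (p.1 = 0 ∧ p.2 = 0) ∨
    (1 ≤ p.2 ∧ p.1 < 2 ^ p.2 ∧ 2 ^ (p.2 - 1) + p.1 % 2 ^ (p.2 - 1) < n) := by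
  intro p h
  induction h with
  | root => exact Or.inl ⟨rfl, rfl⟩
  | even q r h hlen ih =>
      right
      have hlt : q + 2 ^ r < n := two_le_len_iff.1 hlen
      simp only [Nat.add_sub_cancel]
      refine ⟨by omega, ?_, ?_⟩
      · rcases ih with ⟨hq, hr⟩ | ⟨hr, hq, _⟩
        · simp only at hq hr; subst hq; subst hr; norm_num
        · have : (2:ℕ) ^ r ≤ 2 ^ (r + 1) := Nat.pow_le_pow_right (by norm_num) (Nat.le_succ r)
          simp only at hq; omega
      · rcases ih with ⟨hq, hr⟩ | ⟨hr, hq, _⟩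
        · simp only at hq hr; subst hq; subst hr; simpa using hlt
        · simp only at hq
          rw [Nat.mod_eq_of_lt hq]; omega
  | odd q r h hlen ih =>
      right
      have hlt : q + 2 ^ r < n := two_le_len_iff.1 hlen
      simp only [Nat.add_sub_cancel]
      have hq2 : q < 2 ^ r := by
        rcases ih with ⟨hq, hr⟩ | ⟨_, hq, _⟩
        · simp only at hq hr; subst hq; subst hr; norm_num
        · simpa using hq
      have hmod : (q + 2 ^ r) % 2 ^ r = q := by
        rw [Nat.add_mod_right, Nat.mod_eq_of_lt hq2]
      refine ⟨by omega, ?_, ?_⟩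
      · have : (2:ℕ) ^ (r + 1) = 2 * 2 ^ r := by rw [pow_succ]; ring
        omega
      · rw [hmod]; omega

lemma node_char_rev {n : ℕ} : ∀ r q, 1 ≤ r → q < 2 ^ r →
    2 ^ (r - 1) + q % 2 ^ (r - 1) < n → IsNode n (q, r) := by
  intro r
  induction r with
  | zero => omega
  | succ k ih =>
      intro q _ hq hlt
      simp only [Nat.add_sub_cancel] at hlt
      have hppos : 0 < 2 ^ k := Nat.two_pow_pos k
      have hparent : IsNode n (q % 2 ^ k, k) := by
        rcases Nat.eq_zero_or_pos k with hk | hk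
        · subst hk
          simp only [pow_zero, Nat.mod_one]
          exact IsNode.root
        · apply ih _ hk (Nat.mod_lt _ hppos)
          rw [Nat.mod_mod_of_dvd _ (pow_dvd_pow 2 (show k - 1 ≤ k by omega))]
          have hm := f_mono q (show k - 1 ≤ k by omega)
          omega
      have hlen : 2 ≤ len n (q % 2 ^ k) k := two_le_len_iff.2 (by omega)
      have h2k : (2:ℕ) ^ (k + 1) = 2 * 2 ^ k := by rw [pow_succ]; ring
      rcases Nat.lt_or_ge q (2 ^ k) with h | h
      · have hmq : q % 2 ^ k = q := Nat.mod_eq_of_lt h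
        have := IsNode.even _ _ hparent hlen
        rwa [hmq] at this
      · have hmq : q % 2 ^ k = q - 2 ^ k := by
          rw [Nat.mod_eq_sub_mod h, Nat.mod_eq_of_lt (by omega)]
        have := IsNode.odd _ _ hparent hlen
        rw [hmq] at this
        have heq : q - 2 ^ k + 2 ^ k = q := by omega
        rwa [heq] at this

lemma node_fst_lt {n : ℕ} (hn : 1 ≤ n) {q r : ℕ} (h : IsNode n (q, r)) : q < n := by
  rcases node_char_fwd _ h with ⟨hq, _⟩ | ⟨hr, hq, hlt⟩
  · simp only at hq; omega
  · simp only at hr hq hlt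
    have h2 := two_pow_pred hr
    rcases Nat.lt_or_ge q (2 ^ (r - 1)) with h' | h'
    · rw [Nat.mod_eq_of_lt h'] at hlt; omega
    · have : q % 2 ^ (r - 1) = q - 2 ^ (r - 1) := by
        rw [Nat.mod_eq_sub_mod h', Nat.mod_eq_of_lt (by omega)]
      omega

lemma pow_interval_eq {r r' m : ℕ} (h1 : 2 ^ r ≤ m) (h2 : m < 2 ^ (r + 1))
    (h3 : 2 ^ r' ≤ m) (h4 : m < 2 ^ (r' + 1)) : r = r' := by
  by_contra hne
  rcases Nat.lt_or_ge r r' with h | h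
  · have : (2:ℕ) ^ (r + 1) ≤ 2 ^ r' := Nat.pow_le_pow_right (by norm_num) h
    omega
  · have hlt : r' < r := by omega
    have : (2:ℕ) ^ (r' + 1) ≤ 2 ^ r := Nat.pow_le_pow_right (by norm_num) hlt
    omega

lemma leaf_no_deeper {n : ℕ} {q r r' : ℕ} (h : IsNode n (q, r)) (hleaf : len n q r = 1)
    (h' : IsNode n (q, r')) (hrr : r < r') : False := by
  rcases node_char_fwd _ h' with ⟨_, h0⟩ | ⟨hr', hq', hlt⟩
  · simp only at h0; omega
  · simp only at hr' hq' hlt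
    have hle := len_eq_one_iff.1 hleaf
    rcases node_char_fwd _ h with ⟨hq0, hr0⟩ | ⟨hr1, hq, _⟩
    · simp only at hq0 hr0
      subst hq0; subst hr0
      have hm := f_mono 0 (show 0 ≤ r' - 1 from Nat.zero_le _)
      simp only [pow_zero, Nat.mod_one, Nat.zero_mod] at hm hle
      omega
    · simp only at hr1 hq
      have hmono := f_mono q (show r ≤ r' - 1 by omega)
      rw [Nat.mod_eq_of_lt hq] at hmono
      omega

lemma leaf_fst_surj {n : ℕ} (hn : 1 ≤ n) {i : ℕ} (hi : i < n) :
    ∃ r, IsNode n (i, r) ∧ len n i r = 1 := by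
  have hex : ∃ r, n ≤ 2 ^ r + i % 2 ^ r := by
    refine ⟨n, ?_⟩
    have h1 : n < 2 ^ n := Nat.lt_two_pow_self
    omega
  set r := Nat.find hex with hr
  have hfind : n ≤ 2 ^ r + i % 2 ^ r := Nat.find_spec hex
  match hr' : r with
  | 0 =>
      simp only [pow_zero, Nat.mod_one] at hfind
      have hn1 : n = 1 := by omega
      have hi0 : i = 0 := by omega
      subst hn1; subst hi0
      exact ⟨0, IsNode.root, len_eq_one_iff.2 (by norm_num)⟩
  | k + 1 =>
      have hmin : ¬ n ≤ 2 ^ k + i % 2 ^ k := by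
        have := Nat.find_min hex (m := k) (by omega)
        exact this
      push_neg at hmin
      have hilt : i < 2 ^ (k + 1) := by
        by_contra hge
        push_neg at hge
        have : i % 2 ^ (k + 1) ≤ i - 2 ^ (k + 1) := by
          rw [Nat.mod_eq_sub_mod hge]
          exact Nat.mod_le _ _
        omega
      have hmod : i % 2 ^ (k + 1) = i := Nat.mod_eq_of_lt hilt
      refine ⟨k + 1, ?_, ?_⟩
      · apply node_char_rev (k + 1) i (by omega) hilt
        simpa using hmin
      · exact len_eq_one_iff.2 ⟨hi, by omega⟩

lemma internal_surj {n : ℕ} {m : ℕ} (h1 : 1 ≤ m) (h2 : m < n) :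
    ∃ q r, IsNode n (q, r) ∧ 2 ≤ len n q r ∧ q + 2 ^ r = m := by
  set r := Nat.log 2 m with hr
  have hle : 2 ^ r ≤ m := Nat.pow_log_le_self 2 (by omega)
  have hlt : m < 2 ^ (r + 1) := Nat.lt_pow_succ_log_self (by norm_num) m
  refine ⟨m - 2 ^ r, r, ?_, two_le_len_iff.2 (by omega), by omega⟩
  match hr' : r with
  | 0 =>
      have : m = 1 := by
        simp at hle hlt; omega
      simp [this]
      exact IsNode.root
  | k + 1 =>
      have h2k : (2:ℕ) ^ (k + 2) = 2 * 2 ^ (k + 1) := by rw [pow_succ]; ring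
      apply node_char_rev (k + 1) _ (by omega) (by omega)
      simp only [Nat.add_sub_cancel]
      have : (m - 2 ^ (k + 1)) % 2 ^ k < 2 ^ k := Nat.mod_lt _ (Nat.two_pow_pos k)
      have hk2 : (2:ℕ) ^ (k + 1) = 2 * 2 ^ k := by rw [pow_succ]; ring
      omega

lemma node_m_bounds {n : ℕ} {q r : ℕ} (h : IsNode n (q, r)) :
    2 ^ r ≤ q + 2 ^ r ∧ q + 2 ^ r < 2 ^ (r + 1) := by
  have h2 : (2:ℕ) ^ (r + 1) = 2 * 2 ^ r := by rw [pow_succ]; ring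
  rcases node_char_fwd _ h with ⟨hq, hr⟩ | ⟨_, hq, _⟩
  · simp only at hq hr; subst hq; subst hr; norm_num
  · simp only at hq; omega

theorem stmt16 (n : ℕ) (hn : 1 ≤ n) :
    {p : ℕ × ℕ | IsNode n p}.Finite ∧
    {p : ℕ × ℕ | IsNode n p ∧ len n p.1 p.2 = 1}.ncard = n ∧
    {p : ℕ × ℕ | IsNode n p}.ncard = 2 * n - 1 ∧
    (∀ q r : ℕ, IsNode n (q, r) → 1 ≤ r → q < 2 ^ r ∧ 2 ^ (r - 1) < n) := by
  have hsub : {p : ℕ × ℕ | IsNode n p} ⊆ Set.Iio (2 ^ n) ×ˢ Set.Iio (n + 1) := by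
    rintro ⟨q, r⟩ hp
    simp only [Set.mem_setOf_eq] at hp
    simp only [Set.mem_prod, Set.mem_Iio]
    rcases node_char_fwd _ hp with ⟨hq, hr⟩ | ⟨hr, hq, hlt⟩
    · simp only at hq hr; subst hq; subst hr
      exact ⟨Nat.two_pow_pos n, by omega⟩
    · simp only at hr hq hlt
      have hrn : r ≤ n := by
        have h1 : r - 1 < 2 ^ (r - 1) := Nat.lt_two_pow_self
        omega
      have h2 : (2:ℕ) ^ r ≤ 2 ^ n := Nat.pow_le_pow_right (by norm_num) hrn
      exact ⟨by omega, by omega⟩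
  have hNfin : {p : ℕ × ℕ | IsNode n p}.Finite :=
    (((Set.finite_Iio _).prod (Set.finite_Iio _)).subset hsub)
  have hLfin : {p : ℕ × ℕ | IsNode n p ∧ len n p.1 p.2 = 1}.Finite :=
    hNfin.subset (by rintro p ⟨h, _⟩; exact h)
  have hIfin : {p : ℕ × ℕ | IsNode n p ∧ 2 ≤ len n p.1 p.2}.Finite :=
    hNfin.subset (by rintro p ⟨h, _⟩; exact h)
  have hLinj : Set.InjOn Prod.fst {p : ℕ × ℕ | IsNode n p ∧ len n p.1 p.2 = 1} := by
    rintro ⟨q1, r1⟩ ⟨h1, hl1⟩ ⟨q2, r2⟩ ⟨h2, hl2⟩ heq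
    simp only at heq h1 hl1 h2 hl2
    subst heq
    rcases lt_trichotomy r1 r2 with h | h | h
    · exact (leaf_no_deeper h1 hl1 h2 h).elim
    · rw [h]
    · exact (leaf_no_deeper h2 hl2 h1 h).elim
  have hLimg : Prod.fst '' {p : ℕ × ℕ | IsNode n p ∧ len n p.1 p.2 = 1} = Set.Iio n := by
    ext i
    simp only [Set.mem_image, Set.mem_Iio, Set.mem_setOf_eq]
    constructor
    · rintro ⟨⟨q, r⟩, ⟨hnode, hleaf⟩, rfl⟩
      exact node_fst_lt hn hnode
    · intro hi
      obtain ⟨r, h1, h2⟩ := leaf_fst_surj hn hi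
      exact ⟨(i, r), ⟨h1, h2⟩, rfl⟩
  have hLcard : {p : ℕ × ℕ | IsNode n p ∧ len n p.1 p.2 = 1}.ncard = n := by
    rw [← Set.ncard_image_of_injOn hLinj, hLimg, ← Finset.coe_range,
      Set.ncard_coe_finset, Finset.card_range]
  have hIinj : Set.InjOn (fun p : ℕ × ℕ => p.1 + 2 ^ p.2)
      {p : ℕ × ℕ | IsNode n p ∧ 2 ≤ len n p.1 p.2} := by
    rintro ⟨q1, r1⟩ ⟨h1, _⟩ ⟨q2, r2⟩ ⟨h2, _⟩ heq
    simp only at heq h1 h2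
    obtain ⟨b1, b2⟩ := node_m_bounds h1
    obtain ⟨b3, b4⟩ := node_m_bounds h2
    have b3' : 2 ^ r2 ≤ q1 + 2 ^ r1 := by omega
    have b4' : q1 + 2 ^ r1 < 2 ^ (r2 + 1) := by omega
    have hr : r1 = r2 := pow_interval_eq b1 b2 b3' b4'
    subst hr
    have hq : q1 = q2 := by omega
    rw [hq]
  have hIimg : (fun p : ℕ × ℕ => p.1 + 2 ^ p.2) ''
      {p : ℕ × ℕ | IsNode n p ∧ 2 ≤ len n p.1 p.2} = Set.Ico 1 n := by
    ext m
    simp only [Set.mem_image, Set.mem_Ico, Set.mem_setOf_eq]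
    constructor
    · rintro ⟨⟨q, r⟩, ⟨hnode, hlen⟩, rfl⟩
      simp only at hlen ⊢
      have h1 := two_le_len_iff.1 hlen
      have hp := Nat.two_pow_pos r
      omega
    · rintro ⟨h1, h2⟩
      obtain ⟨q, r, hnode, hlen, heq⟩ := internal_surj h1 h2
      exact ⟨(q, r), ⟨hnode, hlen⟩, heq⟩
  have hIcard : {p : ℕ × ℕ | IsNode n p ∧ 2 ≤ len n p.1 p.2}.ncard = n - 1 := by
    rw [← Set.ncard_image_of_injOn hIinj, hIimg, ← Finset.coe_Ico,
      Set.ncard_coe_finset, Nat.card_Ico]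
  have hunion : {p : ℕ × ℕ | IsNode n p} =
      {p : ℕ × ℕ | IsNode n p ∧ len n p.1 p.2 = 1} ∪
      {p : ℕ × ℕ | IsNode n p ∧ 2 ≤ len n p.1 p.2} := by
    ext ⟨q, r⟩
    simp only [Set.mem_union, Set.mem_setOf_eq]
    constructor
    · intro hp
      have h1 : 1 ≤ len n q r := one_le_len_iff.2 (node_fst_lt hn hp)
      rcases Nat.lt_or_ge (len n q r) 2 with h | h
      · exact Or.inl ⟨hp, by omega⟩
      · exact Or.inr ⟨hp, h⟩
    · rintro (⟨h, _⟩ | ⟨h, _⟩) <;> exact h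
  have hdisj : Disjoint {p : ℕ × ℕ | IsNode n p ∧ len n p.1 p.2 = 1}
      {p : ℕ × ℕ | IsNode n p ∧ 2 ≤ len n p.1 p.2} := by
    rw [Set.disjoint_left]
    rintro ⟨q, r⟩ ⟨_, h1⟩ ⟨_, h2⟩
    simp only at h1 h2
    omega
  have hNcard : {p : ℕ × ℕ | IsNode n p}.ncard = 2 * n - 1 := by
    rw [hunion, Set.ncard_union_eq hdisj hLfin hIfin, hLcard, hIcard]
    omega
  refine ⟨hNfin, hLcard, hNcard, ?_⟩
  intro q r hnode hr
  rcases node_char_fwd _ hnode with ⟨_, h0⟩ | ⟨_, hq, hlt⟩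
  · simp only at h0; omega
  · simp only at hq hlt
    exact ⟨hq, by omega⟩
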